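/- arXiv:1801.00846 — 6 statements merged into one kernel-verified Lean document; each statement's English description precedes it below -/
import Mathlib

section
/- Let α ∈ (0,1), L_b > 0, let (Ω, μ) be a measure space, let b : ℝ → ℝ be monotone nondecreasing with |b(x) − b(y)| ≤ L_b·|x − y|^α for all x, y ∈ ℝ, and let f, g : Ω → ℝ be measurable with x ↦ (b(f(x)) − b(g(x)))·(f(x) − g(x)) integrable. Then ∫_Ω (b(f(x)) − b(g(x)))·(f(x) − g(x)) dμ ≥ L_b^{−1/α} · ∫_Ω |b(f(x)) − b(g(x))|^{(1+α)/α} dμ. -/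
open MeasureTheory

lemma aux_ordered (α Lb : ℝ) (hα : 0 < α) (hLb : 0 < Lb) (A D : ℝ)
    (hA : 0 ≤ A) (hD : 0 ≤ D) (h : A ≤ Lb * D ^ α) :
    Lb ^ (-(1/α)) * A ^ ((1+α)/α) ≤ A * D := by
  have h1 : A ^ (1/α) ≤ Lb ^ (1/α) * D := by
    calc A ^ (1/α) ≤ (Lb * D ^ α) ^ (1/α) :=
          Real.rpow_le_rpow hA h (by positivity)
      _ = Lb ^ (1/α) * (D ^ α) ^ (1/α) := Real.mul_rpow hLb.le (by positivity)
      _ = Lb ^ (1/α) * D := by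
          rw [← Real.rpow_mul hD, mul_one_div_cancel hα.ne', Real.rpow_one]
  have h2 : A ^ ((1+α)/α) = A * A ^ (1/α) := by
    rcases eq_or_lt_of_le hA with h0 | h0
    · rw [← h0, Real.zero_rpow (by positivity), Real.zero_rpow (by positivity), zero_mul]
    · rw [show (1+α)/α = 1 + 1/α by field_simp; ring, Real.rpow_add h0, Real.rpow_one]
  rw [h2]
  calc Lb ^ (-(1/α)) * (A * A ^ (1/α)) ≤ Lb ^ (-(1/α)) * (A * (Lb ^ (1/α) * D)) := by
        have : (0:ℝ) ≤ Lb ^ (-(1/α)) := by positivity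
        gcongr
    _ = (Lb ^ (-(1/α)) * Lb ^ (1/α)) * (A * D) := by ring
    _ = A * D := by rw [← Real.rpow_add hLb]; simp

lemma ptwise (α Lb : ℝ) (hα : 0 < α) (hLb : 0 < Lb) (b : ℝ → ℝ) (hmono : Monotone b)
    (hHolder : ∀ x y : ℝ, |b x - b y| ≤ Lb * |x - y| ^ α) (u v : ℝ) :
    Lb ^ (-(1/α)) * |b u - b v| ^ ((1+α)/α) ≤ (b u - b v) * (u - v) := by
  rcases le_total v u with h | h
  · have hb : b v ≤ b u := hmono h
    have hH := hHolder u v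
    rw [abs_of_nonneg (sub_nonneg.2 hb), abs_of_nonneg (sub_nonneg.2 h)] at hH
    have := aux_ordered α Lb hα hLb (b u - b v) (u - v)
      (sub_nonneg.2 hb) (sub_nonneg.2 h) hH
    rwa [abs_of_nonneg (sub_nonneg.2 hb)]
  · have hb : b u ≤ b v := hmono h
    have hH := hHolder v u
    rw [abs_of_nonneg (sub_nonneg.2 hb), abs_of_nonneg (sub_nonneg.2 h)] at hH
    have key := aux_ordered α Lb hα hLb (b v - b u) (v - u)
      (sub_nonneg.2 hb) (sub_nonneg.2 h) hH
    rw [abs_sub_comm, abs_of_nonneg (sub_nonneg.2 hb),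
      show (b u - b v) * (u - v) = (b v - b u) * (v - u) by ring]
    exact key

theorem stmt_1 {Ω : Type*} [MeasurableSpace Ω] (μ : Measure Ω)
    (α Lb : ℝ) (hα : α ∈ Set.Ioo (0:ℝ) 1) (hLb : 0 < Lb)
    (b : ℝ → ℝ) (hmono : Monotone b)
    (hHolder : ∀ x y : ℝ, |b x - b y| ≤ Lb * |x - y| ^ α)
    (f g : Ω → ℝ) (hf : Measurable f) (hg : Measurable g)
    (hint : Integrable (fun x => (b (f x) - b (g x)) * (f x - g x)) μ) :
    ∫ x, (b (f x) - b (g x)) * (f x - g x) ∂μ ≥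
      Lb ^ (-(1/α)) * ∫ x, |b (f x) - b (g x)| ^ ((1 + α) / α) ∂μ := by
  have hα0 : 0 < α := hα.1
  have hc : (0:ℝ) < Lb ^ (-(1/α)) := by positivity
  have hpt : ∀ x, Lb ^ (-(1/α)) * |b (f x) - b (g x)| ^ ((1 + α) / α) ≤
      (b (f x) - b (g x)) * (f x - g x) := fun x =>
    ptwise α Lb hα0 hLb b hmono hHolder (f x) (g x)
  have hbm : Measurable b := hmono.measurable
  have hmeas : Measurable (fun x => |b (f x) - b (g x)| ^ ((1 + α) / α)) :=
    by fun_prop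
  have hI2 : Integrable (fun x => |b (f x) - b (g x)| ^ ((1 + α) / α)) μ := by
    refine (hint.const_mul ((Lb ^ (-(1/α)))⁻¹)).mono hmeas.aestronglyMeasurable
      (Filter.Eventually.of_forall fun x => ?_)
    have h1 : |b (f x) - b (g x)| ^ ((1 + α) / α) ≤
        (Lb ^ (-(1/α)))⁻¹ * ((b (f x) - b (g x)) * (f x - g x)) := by
      exact (le_inv_mul_iff₀ hc).2 (hpt x)
    calc ‖|b (f x) - b (g x)| ^ ((1 + α) / α)‖
        = |b (f x) - b (g x)| ^ ((1 + α) / α) := by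
          rw [Real.norm_eq_abs, abs_of_nonneg (by positivity)]
      _ ≤ (Lb ^ (-(1/α)))⁻¹ * ((b (f x) - b (g x)) * (f x - g x)) := h1
      _ ≤ ‖(Lb ^ (-(1/α)))⁻¹ * ((b (f x) - b (g x)) * (f x - g x))‖ := le_abs_self _
  calc Lb ^ (-(1/α)) * ∫ x, |b (f x) - b (g x)| ^ ((1 + α) / α) ∂μ
      = ∫ x, Lb ^ (-(1/α)) * |b (f x) - b (g x)| ^ ((1 + α) / α) ∂μ :=
        (integral_const_mul _ _).symm
    _ ≤ ∫ x, (b (f x) - b (g x)) * (f x - g x) ∂μ :=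
        integral_mono (hI2.const_mul _) hint hpt
end

section
/- Let α ∈ (0,1), L_b > 0, let (Ω, μ) be a measure space, let b : ℝ → ℝ satisfy |b(x) − b(y)| ≤ L_b·|x − y|^α for all x, y ∈ ℝ, and let f, g, h : Ω → ℝ be measurable such that x ↦ (b(f(x)) − b(g(x)))·h(x) is integrable, x ↦ |b(f(x)) − b(g(x))|^{(1+α)/α} is integrable, and x ↦ |h(x)|^{1+α} is integrable. Then |∫_Ω (b(f(x)) − b(g(x)))·h(x) dμ| ≤ (1/(2·L_b^{1/α}))·∫_Ω |b(f(x)) − b(g(x))|^{(1+α)/α} dμ + (2α)^α·L_b·(1+α)^{−(1+α)}·∫_Ω |h(x)|^{1+α} dμ. -/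
open MeasureTheory

theorem stmt_3 {Ω : Type*} [MeasurableSpace Ω] (μ : Measure Ω)
    (α Lb : ℝ) (hα : α ∈ Set.Ioo (0:ℝ) 1) (hLb : 0 < Lb)
    (b : ℝ → ℝ) (hHolder : ∀ x y : ℝ, |b x - b y| ≤ Lb * |x - y| ^ α)
    (f g h : Ω → ℝ) (hf : Measurable f) (hg : Measurable g) (hh : Measurable h)
    (hint1 : Integrable (fun x => (b (f x) - b (g x)) * h x) μ)
    (hint2 : Integrable (fun x => |b (f x) - b (g x)| ^ ((1 + α) / α)) μ)
    (hint3 : Integrable (fun x => |h x| ^ (1 + α)) μ) :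
    |∫ x, (b (f x) - b (g x)) * h x ∂μ| ≤
      (1 / (2 * Lb ^ (1/α))) * ∫ x, |b (f x) - b (g x)| ^ ((1 + α) / α) ∂μ +
        (2 * α) ^ α * Lb * (1 + α) ^ (-(1 + α)) * ∫ x, |h x| ^ (1 + α) ∂μ := by
  obtain ⟨hα0, hα1⟩ := hα
  set p : ℝ := (1 + α) / α with hp
  set q : ℝ := 1 + α with hq
  have hq0 : (0:ℝ) < q := by positivity
  have hp0 : (0:ℝ) < p := by positivity
  have hpq : p.HolderConjugate q := by
    rw [Real.holderConjugate_iff]; constructor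
    · rw [hp, lt_div_iff₀ hα0, one_mul]; linarith
    · rw [hp, hq]; field_simp; ring
  have hLbα : (0:ℝ) < Lb ^ (1/α) := Real.rpow_pos_of_pos hLb _
  set s : ℝ := (1 + α) / (2 * α * Lb ^ (1/α)) with hs
  have hs0 : 0 < s := by positivity
  set ε : ℝ := s ^ (1/p) with hε
  have hε0 : 0 < ε := Real.rpow_pos_of_pos hs0 _
  have hεp : ε ^ p = s := by
    rw [hε, ← Real.rpow_mul hs0.le, one_div_mul_cancel hp0.ne', Real.rpow_one]
  have hεq : ε ^ q = s ^ α := by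
    rw [hε, ← Real.rpow_mul hs0.le]
    congr 1
    rw [hp, hq]
    field_simp
  set c1 : ℝ := 1 / (2 * Lb ^ (1/α)) with hc1
  set c2 : ℝ := 1 / (s ^ α * q) with hc2
  have hc1' : ε ^ p / p = c1 := by
    rw [hεp, hs, hc1, hp, hq]
    field_simp
  have hsα : (0:ℝ) < s ^ α := Real.rpow_pos_of_pos hs0 _
  have hc2' : (2 * α) ^ α * Lb * (1 + α) ^ (-(1 + α)) = c2 := by
    have h1 : s ^ α = (1+α)^α / ((2*α)^α * Lb) := by
      rw [hs, Real.div_rpow (by positivity) (by positivity),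
        Real.mul_rpow (by positivity) hLbα.le,
        ← Real.rpow_mul hLb.le, one_div_mul_cancel hα0.ne', Real.rpow_one]
    have h2 : (1+α:ℝ) ^ (-(1+α)) = ((1+α)^α * (1+α))⁻¹ := by
      rw [Real.rpow_neg (by positivity)]
      congr 1
      rw [Real.rpow_add (by positivity), Real.rpow_one, mul_comm]
    have h3 : (0:ℝ) < (1+α)^α := Real.rpow_pos_of_pos (by positivity) _
    have h4 : (0:ℝ) < (2*α)^α := Real.rpow_pos_of_pos (by positivity) _
    rw [hc2, h1, h2, hq]
    field_simp
  have key : ∀ x, |(b (f x) - b (g x)) * h x| ≤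
      c1 * |b (f x) - b (g x)| ^ p + c2 * |h x| ^ q := by
    intro x
    set A := |b (f x) - b (g x)| with hA
    have hA0 : 0 ≤ A := abs_nonneg _
    have hh0 : 0 ≤ |h x| := abs_nonneg _
    calc |(b (f x) - b (g x)) * h x| = (ε * A) * (|h x| / ε) := by
          rw [abs_mul]; field_simp; ring
      _ ≤ (ε * A) ^ p / p + (|h x| / ε) ^ q / q :=
          Real.young_inequality_of_nonneg (by positivity) (by positivity) hpq
      _ = c1 * A ^ p + c2 * |h x| ^ q := by
          rw [Real.mul_rpow hε0.le hA0, Real.div_rpow hh0 hε0.le, hεq]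
          rw [← hc1', hεp]
          rw [hc2]
          field_simp
  calc |∫ x, (b (f x) - b (g x)) * h x ∂μ|
      ≤ ∫ x, |(b (f x) - b (g x)) * h x| ∂μ := by
        simpa only [Real.norm_eq_abs] using
          norm_integral_le_integral_norm (fun x => (b (f x) - b (g x)) * h x) (μ := μ)
    _ ≤ ∫ x, (c1 * |b (f x) - b (g x)| ^ p + c2 * |h x| ^ q) ∂μ := by
        refine integral_mono hint1.abs ?_ key
        exact (hint2.const_mul c1).add (hint3.const_mul c2)
    _ = c1 * (∫ x, |b (f x) - b (g x)| ^ p ∂μ) + c2 * (∫ x, |h x| ^ q ∂μ) := by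
        rw [integral_add (hint2.const_mul c1) (hint3.const_mul c2),
          integral_const_mul, integral_const_mul]
    _ = (1 / (2 * Lb ^ (1/α))) * ∫ x, |b (f x) - b (g x)| ^ ((1 + α) / α) ∂μ +
        (2 * α) ^ α * Lb * (1 + α) ^ (-(1 + α)) * ∫ x, |h x| ^ (1 + α) ∂μ := by
        rw [hc2']
end

section
/- Let α ∈ (0,1) and ε > 0, and define b(u) = (max{u,0})^α and the linear regularization b_ε : ℝ → ℝ by b_ε(u) = ε^{α−1}·u for u ∈ (0,ε) and b_ε(u) = b(u) otherwise. Then for all x ∈ ℝ one has 0 ≤ b(x) − b_ε(x) ≤ (1−α)·α^{α/(1−α)}·ε^α. -/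
theorem stmt_13 (α ε : ℝ) (hα : α ∈ Set.Ioo (0:ℝ) 1) (hε : 0 < ε)
    (b bε : ℝ → ℝ)
    (hb : ∀ u : ℝ, b u = (max u 0) ^ α)
    (hbε : ∀ u : ℝ, bε u = if u ∈ Set.Ioo 0 ε then ε ^ (α - 1) * u else b u) :
    ∀ x : ℝ, 0 ≤ b x - bε x ∧ b x - bε x ≤ (1 - α) * α ^ (α / (1 - α)) * ε ^ α := by
  obtain ⟨hα0, hα1⟩ := hα
  have h1α : (0:ℝ) < 1 - α := by linarith
  have hCpos : 0 ≤ (1 - α) * α ^ (α / (1 - α)) * ε ^ α := by positivity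
  -- the tangent point
  set c : ℝ := α ^ ((1:ℝ) / (1 - α)) * ε with hc
  have hcpos : 0 < c := by positivity
  have hcα : c ^ α = α ^ (α / (1 - α)) * ε ^ α := by
    rw [hc, Real.mul_rpow (by positivity) hε.le, ← Real.rpow_mul hα0.le]
    have h : (1:ℝ) / (1 - α) * α = α / (1 - α) := by ring
    rw [h]
  have hcα1 : α * c ^ (α - 1) = ε ^ (α - 1) := by
    rw [hc, Real.mul_rpow (by positivity) hε.le, ← Real.rpow_mul hα0.le]
    have : (1:ℝ) / (1 - α) * (α - 1) = -1 := by
      field_simp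
      ring
    rw [this, Real.rpow_neg_one]
    field_simp
  -- key upper bound for x ≥ 0
  have key : ∀ x : ℝ, 0 ≤ x → x ^ α ≤ ε ^ (α - 1) * x + (1 - α) * α ^ (α / (1 - α)) * ε ^ α := by
    intro x hx
    have hgm := Real.geom_mean_le_arith_mean2_weighted hα0.le h1α.le
      (p₁ := x / c) (p₂ := 1) (by positivity) zero_le_one (by ring)
    rw [Real.one_rpow, mul_one, mul_one] at hgm
    rw [Real.div_rpow hx hcpos.le] at hgm
    have hcαpos : 0 < c ^ α := Real.rpow_pos_of_pos hcpos _
    have := mul_le_mul_of_nonneg_left hgm hcαpos.le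
    rw [mul_div_cancel₀ _ (ne_of_gt hcαpos)] at this
    calc x ^ α ≤ c ^ α * (α * (x / c) + (1 - α)) := this
      _ = (α * c ^ (α - 1)) * x + (1 - α) * c ^ α := by
          rw [Real.rpow_sub hcpos, Real.rpow_one]
          field_simp
      _ = ε ^ (α - 1) * x + (1 - α) * α ^ (α / (1 - α)) * ε ^ α := by
          rw [hcα1, hcα]; ring
  intro x
  rw [hbε, hb]
  by_cases hx : x ∈ Set.Ioo 0 ε
  · obtain ⟨hx0, hxε⟩ := hx
    rw [if_pos ⟨hx0, hxε⟩, max_eq_left hx0.le]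
    constructor
    · have h1 : ε ^ (α - 1) ≤ x ^ (α - 1) :=
        Real.rpow_le_rpow_of_nonpos hx0 hxε.le (by linarith)
      have h2 : ε ^ (α - 1) * x ≤ x ^ (α - 1) * x :=
        mul_le_mul_of_nonneg_right h1 hx0.le
      have h3 : x ^ (α - 1) * x = x ^ α := by
        rw [← Real.rpow_add_one hx0.ne' (α - 1)]; ring_nf
      linarith [h2, h3.symm ▸ h2]
    · have := key x hx0.le
      linarith
  · rw [if_neg hx]
    constructor
    · simp
    · simpa using hCpos
end

section
/- Let α ∈ (0,1) and ε > 0, and define b(u) = (max{u,0})^α and the quadratic regularization b_ε : ℝ → ℝ by b_ε(u) = (α−1)·ε^{α−2}·u² + (2−α)·ε^{α−1}·u for u ∈ (0,ε) and b_ε(u) = b(u) otherwise. Then b_ε is monotone nondecreasing and continuous on ℝ. -/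
theorem stmt_14 (α ε : ℝ) (hα : α ∈ Set.Ioo (0:ℝ) 1) (hε : 0 < ε)
    (b bε : ℝ → ℝ)
    (hb : ∀ u : ℝ, b u = (max u 0) ^ α)
    (hbε : ∀ u : ℝ, bε u =
      if u ∈ Set.Ioo 0 ε then (α - 1) * ε ^ (α - 2) * u ^ 2 + (2 - α) * ε ^ (α - 1) * u
      else b u) :
    Monotone bε ∧ Continuous bε := by
  obtain ⟨hα0, hα1⟩ := hα
  set Q : ℝ → ℝ := fun u => (α - 1) * ε ^ (α - 2) * u ^ 2 + (2 - α) * ε ^ (α - 1) * u with hQ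
  have hApos : 0 < ε ^ (α - 2) := Real.rpow_pos_of_pos hε _
  have hB : ε ^ (α - 1) = ε ^ (α - 2) * ε := by
    rw [← Real.rpow_add_one hε.ne' (α - 2)]; ring_nf
  have hQ0 : Q 0 = 0 := by simp [hQ]
  have hQε : Q ε = ε ^ α := by
    have h2 : ε ^ α = ε ^ (α - 2) * ε ^ 2 := by
      rw [← Real.rpow_natCast ε 2, ← Real.rpow_add hε]; norm_num
    simp only [hQ, hB, h2]; ring
  have hb0 : b 0 = 0 := by
    rw [hb]; simp [Real.zero_rpow hα0.ne']
  have hbεval : b ε = ε ^ α := by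
    rw [hb, max_eq_left hε.le]
  -- values
  have hval0 : ∀ u : ℝ, u ≤ 0 → bε u = 0 := by
    intro u hu
    rw [hbε, if_neg (by simp only [Set.mem_Ioo, not_and]; intro h; linarith),
      hb, max_eq_right hu, Real.zero_rpow hα0.ne']
  have hvalQ : ∀ u : ℝ, u ∈ Set.Icc (0:ℝ) ε → bε u = Q u := by
    intro u hu
    rcases eq_or_lt_of_le hu.1 with h0 | h0
    · rw [hbε, if_neg (by simp [Set.mem_Ioo, ← h0]), ← h0, hb0, hQ0]
    rcases eq_or_lt_of_le hu.2 with hε' | hε'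
    · rw [hbε, if_neg (by simp [Set.mem_Ioo, hε']), hε', hbεval, hQε]
    · rw [hbε, if_pos ⟨h0, hε'⟩]
  have hvalR : ∀ u : ℝ, ε ≤ u → bε u = u ^ α := by
    intro u hu
    rw [hbε, if_neg (by simp only [Set.mem_Ioo, not_and]; intro h; linarith),
      hb, max_eq_left (le_trans hε.le hu)]
  -- monotonicity of Q on [0, ε]
  have hQmono : ∀ u v : ℝ, 0 ≤ u → u ≤ v → v ≤ ε → Q u ≤ Q v := by
    intro u v hu huv hv
    have hbr : 0 ≤ (α - 1) * (u + v) + (2 - α) * ε := by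
      nlinarith [mul_nonneg (by linarith : (0:ℝ) ≤ 1 - α) (by linarith : 0 ≤ 2 * ε - (u + v))]
    have key : 0 ≤ ε ^ (α - 2) * (v - u) * ((α - 1) * (u + v) + (2 - α) * ε) :=
      mul_nonneg (mul_nonneg hApos.le (by linarith)) hbr
    simp only [hQ, hB]
    nlinarith [key]
  have hQnonneg : ∀ u : ℝ, 0 ≤ u → u ≤ ε → 0 ≤ Q u := by
    intro u h1 h2
    have := hQmono 0 u le_rfl h1 h2
    rwa [hQ0] at this
  constructor
  · intro u v huv
    rcases le_or_gt v 0 with hv0 | hv0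
    · rw [hval0 u (huv.trans hv0), hval0 v hv0]
    rcases le_total v ε with hvε | hvε
    · rcases le_or_gt u 0 with hu0 | hu0
      · rw [hval0 u hu0, hvalQ v ⟨hv0.le, hvε⟩]
        exact hQnonneg v hv0.le hvε
      · rw [hvalQ u ⟨hu0.le, huv.trans hvε⟩, hvalQ v ⟨hv0.le, hvε⟩]
        exact hQmono u v hu0.le huv hvε
    · have hvα : bε v = v ^ α := hvalR v hvε
      rcases le_or_gt u 0 with hu0 | hu0
      · rw [hval0 u hu0, hvα]
        exact Real.rpow_nonneg (le_trans hε.le hvε) α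
      rcases le_total u ε with huε | huε
      · rw [hvalQ u ⟨hu0.le, huε⟩, hvα]
        calc Q u ≤ Q ε := hQmono u ε hu0.le huε le_rfl
          _ = ε ^ α := hQε
          _ ≤ v ^ α := Real.rpow_le_rpow hε.le hvε hα0.le
      · rw [hvalR u huε, hvα]
        exact Real.rpow_le_rpow (le_trans hε.le huε) huv hα0.le
  · have hbc : Continuous b := by
      rw [show b = fun u => (max u 0) ^ α from funext hb]
      exact (continuous_id.max continuous_const).rpow_const (fun x => Or.inr hα0.le)
    have : bε = fun u => if u ∈ Set.Ioo 0 ε then Q u else b u := funext hbε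
    rw [this]
    apply Continuous.if
    · intro a ha
      rw [show {a : ℝ | a ∈ Set.Ioo 0 ε} = Set.Ioo 0 ε from rfl, frontier_Ioo hε] at ha
      rcases ha with h | h
      · rw [h, hQ0, hb0]
      · rw [h, hQε, hbεval]
    · fun_prop
    · exact hbc
end

section
/- Let α ∈ (0,1) and ε > 0, and define b(u) = (max{u,0})^α and the quadratic regularization b_ε : ℝ → ℝ by b_ε(u) = (α−1)·ε^{α−2}·u² + (2−α)·ε^{α−1}·u for u ∈ (0,ε) and b_ε(u) = b(u) otherwise. Then b_ε is Lipschitz continuous with constant (2−α)·ε^{α−1}, i.e. |b_ε(x) − b_ε(y)| ≤ (2−α)·ε^{α−1}·|x − y| for all x, y ∈ ℝ. -/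
theorem stmt_15 (α ε : ℝ) (hα : α ∈ Set.Ioo (0:ℝ) 1) (hε : 0 < ε)
    (b bε : ℝ → ℝ)
    (hb : ∀ u : ℝ, b u = (max u 0) ^ α)
    (hbε : ∀ u : ℝ, bε u =
      if u ∈ Set.Ioo 0 ε then (α - 1) * ε ^ (α - 2) * u ^ 2 + (2 - α) * ε ^ (α - 1) * u
      else b u) :
    ∀ x y : ℝ, |bε x - bε y| ≤ (2 - α) * ε ^ (α - 1) * |x - y| := by
  obtain ⟨hα0, hα1⟩ := hα
  set A := ε ^ (α - 1) with hAdef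
  set B := ε ^ (α - 2) with hBdef
  have hA : 0 < A := Real.rpow_pos_of_pos hε _
  have hB : 0 < B := Real.rpow_pos_of_pos hε _
  have hAB : A = B * ε := by
    rw [hAdef, hBdef, ← Real.rpow_add_one hε.ne' (α - 2)]
    ring_nf
  have hεα : ε ^ α = A * ε := by
    rw [hAdef, ← Real.rpow_add_one hε.ne' (α - 1)]
    ring_nf
  set L := (2 - α) * A with hL
  -- evaluation lemmas
  have e0 : ∀ u : ℝ, u ≤ 0 → bε u = 0 := by
    intro u hu
    rw [hbε, if_neg, hb, max_eq_right hu, Real.zero_rpow hα0.ne']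
    simp only [Set.mem_Ioo, not_and_or, not_lt]
    exact Or.inl hu
  have e1 : ∀ u : ℝ, 0 ≤ u → u ≤ ε → bε u = (α - 1) * B * u ^ 2 + (2 - α) * A * u := by
    intro u hu0 huε
    rcases eq_or_lt_of_le hu0 with h0 | h0
    · rw [e0 u h0.symm.le, ← h0]; ring
    rcases eq_or_lt_of_le huε with h1 | h1
    · rw [hbε, if_neg (by simp [Set.mem_Ioo, h1])]
      rw [hb, max_eq_left (h1 ▸ hε.le), h1, hεα, hAB]
      ring
    · rw [hbε, if_pos ⟨h0, h1⟩]
  have e2 : ∀ u : ℝ, ε ≤ u → bε u = u ^ α := by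
    intro u hu
    rw [hbε, if_neg (by simp [Set.mem_Ioo, not_lt.2 hu]), hb,
      max_eq_left (le_trans hε.le hu)]
  -- P x y : the one-sided Lipschitz/monotonicity property
  have P2 : ∀ x y : ℝ, 0 ≤ x → x ≤ y → y ≤ ε →
      0 ≤ bε y - bε x ∧ bε y - bε x ≤ L * (y - x) := by
    intro x y hx hxy hy
    have hy0 : 0 ≤ y := le_trans hx hxy
    rw [e1 x hx (le_trans hxy hy), e1 y hy0 hy, hL]
    have hbr : 0 ≤ (α - 1) * (x + y) + (2 - α) * ε := by
      nlinarith [mul_nonneg (by linarith : (0:ℝ) ≤ 1 - α)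
        (by linarith : (0:ℝ) ≤ 2 * ε - (x + y))]
    constructor
    · rw [hAB]
      nlinarith [mul_nonneg (mul_nonneg hB.le (sub_nonneg.2 hxy)) hbr]
    · nlinarith [mul_nonneg (by linarith : (0:ℝ) ≤ 1 - α)
        (mul_nonneg hB.le (mul_nonneg (sub_nonneg.2 hxy) (by linarith : (0:ℝ) ≤ x + y)))]
  have P3 : ∀ x y : ℝ, ε ≤ x → x ≤ y →
      0 ≤ bε y - bε x ∧ bε y - bε x ≤ L * (y - x) := by
    intro x y hx hxy
    have hx0 : 0 < x := lt_of_lt_of_le hε hx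
    rw [e2 x hx, e2 y (le_trans hx hxy)]
    have hmono : x ^ α ≤ y ^ α := Real.rpow_le_rpow hx0.le hxy hα0.le
    constructor
    · linarith
    · -- y^α ≤ x^(α-1) * y,  x^α = x^(α-1)*x
      have h1 : y ^ (α - 1) ≤ x ^ (α - 1) :=
        Real.rpow_le_rpow_of_nonpos hx0 hxy (by linarith)
      have h2 : x ^ (α - 1) ≤ A :=
        Real.rpow_le_rpow_of_nonpos hε hx (by linarith)
      have hy0 : 0 < y := lt_of_lt_of_le hx0 hxy
      have hyα : y ^ α = y ^ (α - 1) * y := by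
        rw [← Real.rpow_add_one hy0.ne' (α - 1)]; ring_nf
      have hxα : x ^ α = x ^ (α - 1) * x := by
        rw [← Real.rpow_add_one hx0.ne' (α - 1)]; ring_nf
      have hxA : 0 < x ^ (α - 1) := Real.rpow_pos_of_pos hx0 _
      have key : y ^ α - x ^ α ≤ x ^ (α - 1) * (y - x) := by
        rw [hyα, hxα]
        nlinarith [mul_le_mul_of_nonneg_right h1 hy0.le]
      have : x ^ (α - 1) * (y - x) ≤ A * (y - x) :=
        mul_le_mul_of_nonneg_right h2 (by linarith)
      have hLA : A * (y - x) ≤ L * (y - x) := by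
        rw [hL]
        nlinarith [mul_nonneg hA.le (sub_nonneg.2 hxy)]
      linarith
  have P : ∀ x y : ℝ, x ≤ y → 0 ≤ bε y - bε x ∧ bε y - bε x ≤ L * (y - x) := by
    intro x y hxy
    have hLpos : 0 < L := by rw [hL]; exact mul_pos (by linarith) hA
    rcases le_total y 0 with hy0 | hy0
    · rw [e0 x (le_trans hxy hy0), e0 y hy0]
      refine ⟨by norm_num, ?_⟩
      have : 0 ≤ L * (y - x) := mul_nonneg hLpos.le (by linarith)
      linarith
    rcases le_total y ε with hyε | hyε
    · -- y ∈ [0, ε]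
      rcases le_total 0 x with hx0 | hx0
      · exact P2 x y hx0 hxy hyε
      · have h := P2 0 y le_rfl hy0 hyε
        rw [e0 x hx0]
        have h0 : bε 0 = 0 := e0 0 le_rfl
        constructor
        · linarith [h.1, h0 ▸ h.1]
        · have := h.2
          rw [h0] at this
          nlinarith [mul_nonneg hLpos.le (neg_nonneg.2 hx0)]
    · -- y ≥ ε
      rcases le_total ε x with hxε | hxε
      · exact P3 x y hxε hxy
      rcases le_total 0 x with hx0 | hx0
      · have h1 := P2 x ε hx0 hxε le_rfl
        have h2 := P3 ε y le_rfl hyε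
        exact ⟨by linarith [h1.1, h2.1], by linarith [h1.2, h2.2]⟩
      · have h1 := P2 0 ε le_rfl hε.le le_rfl
        have h2 := P3 ε y le_rfl hyε
        rw [e0 x hx0]
        have h0 : bε 0 = 0 := e0 0 le_rfl
        rw [h0] at h1
        constructor
        · linarith [h1.1, h2.1]
        · have : bε y - 0 ≤ L * (y - 0) := by linarith [h1.2, h2.2]
          nlinarith [mul_nonneg hLpos.le (neg_nonneg.2 hx0)]
  intro x y
  rcases le_total x y with h | h
  · have := P x y h
    rw [abs_sub_comm (bε x), abs_of_nonneg this.1, abs_sub_comm x y,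
      abs_of_nonneg (sub_nonneg.2 h)]
    exact this.2
  · have := P y x h
    rw [abs_of_nonneg this.1, abs_of_nonneg (sub_nonneg.2 h)]
    exact this.2
end

section
/- Let α ∈ (0,1) and ε > 0, and define b(u) = (max{u,0})^α and the quadratic regularization b_ε : ℝ → ℝ by b_ε(u) = (α−1)·ε^{α−2}·u² + (2−α)·ε^{α−1}·u for u ∈ (0,ε) and b_ε(u) = b(u) otherwise. Then b_ε(x) ≤ b(x) for all x ∈ ℝ. -/
lemma aux_key_16 {α t : ℝ} (hα0 : 0 < α) (hα1 : α < 1) (ht0 : 0 < t) (ht1 : t < 1) :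
    (α - 1) * t ^ 2 + (2 - α) * t ≤ t ^ α := by
  have hs : (-1:ℝ) ≤ 1 / t - 1 := by
    have : (0:ℝ) < 1 / t := by positivity
    linarith
  have h1 : ((1:ℝ) + (1 / t - 1)) ^ α ≤ 1 + α * (1 / t - 1) :=
    rpow_one_add_le_one_add_mul_self hs hα0.le hα1.le
  rw [show (1:ℝ) + (1 / t - 1) = 1 / t by ring] at h1
  have hdiv : (1 / t) ^ α = 1 / t ^ α := by
    rw [Real.div_rpow (by norm_num) ht0.le, Real.one_rpow]
  rw [hdiv] at h1
  have hC : 0 < t + α * (1 - t) := by nlinarith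
  have hB : 1 + α * (1 / t - 1) = (t + α * (1 - t)) / t := by
    field_simp
  rw [hB] at h1
  have htα : 0 < t ^ α := Real.rpow_pos_of_pos ht0 α
  have h2 : t / (t + α * (1 - t)) ≤ t ^ α := by
    rw [div_le_iff₀ hC]
    have h3 := mul_le_mul_of_nonneg_left h1 (mul_pos ht0 htα).le
    have e : t * t ^ α * (1 / t ^ α) = t := by field_simp
    have e2 : t * t ^ α * ((t + α * (1 - t)) / t) = t ^ α * (t + α * (1 - t)) := by
      field_simp
    rw [e, e2] at h3
    exact h3
  refine le_trans ?_ h2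
  rw [le_div_iff₀ hC]
  nlinarith [mul_nonneg ht0.le (sq_nonneg ((α - 1) * (t - 1)))]

theorem stmt_16 (α ε : ℝ) (hα : α ∈ Set.Ioo (0:ℝ) 1) (hε : 0 < ε)
    (b bε : ℝ → ℝ)
    (hb : ∀ u : ℝ, b u = (max u 0) ^ α)
    (hbε : ∀ u : ℝ, bε u =
      if u ∈ Set.Ioo 0 ε then (α - 1) * ε ^ (α - 2) * u ^ 2 + (2 - α) * ε ^ (α - 1) * u
      else b u) :
    ∀ x : ℝ, bε x ≤ b x := by
  obtain ⟨hα0, hα1⟩ := hα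
  intro x
  rw [hbε x]
  split_ifs with h
  · obtain ⟨hx0, hxε⟩ := h
    rw [hb x, max_eq_left hx0.le]
    have ht0 : 0 < x / ε := by positivity
    have ht1 : x / ε < 1 := (div_lt_one hε).mpr hxε
    have key := aux_key_16 hα0 hα1 ht0 ht1
    have hm := mul_le_mul_of_nonneg_left key (Real.rpow_nonneg hε.le α)
    have hx : x ^ α = ε ^ α * (x / ε) ^ α := by
      rw [← Real.mul_rpow hε.le ht0.le, mul_div_cancel₀ _ hε.ne']
    have e2 : ε ^ (α - 2) = ε ^ α / ε ^ 2 := by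
      rw [Real.rpow_sub hε, show (2:ℝ) = ((2:ℕ):ℝ) by norm_num, Real.rpow_natCast]
    have e1 : ε ^ (α - 1) = ε ^ α / ε := by
      rw [Real.rpow_sub hε, Real.rpow_one]
    rw [hx, e2, e1]
    calc (α - 1) * (ε ^ α / ε ^ 2) * x ^ 2 + (2 - α) * (ε ^ α / ε) * x
        = ε ^ α * ((α - 1) * (x / ε) ^ 2 + (2 - α) * (x / ε)) := by
          field_simp
      _ ≤ ε ^ α * (x / ε) ^ α := hm
  · exact le_of_eq rfl
end
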